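/- Let f_k : [0,1] → ℝ be a polynomial of degree at most k (k ≥ 2) with f_k(1) = f_k'(1) = 0, and let m_k(0) ∈ ℝ. Define m_k(t) = (1−t)^k m_k(0) − (1−t)^k ∫_0^t f_k'(u)/(1−u)^{k+1} du for t ∈ [0,1). Then m_k extends to a polynomial in t of degree at most k with m_k(1) = 0 and lim_{t→1} m_k(t)/(1−t) = f_k''(1)/(k−1). -/

import Mathlib

open Set Polynomial

theorem stmt_6 (k : ℕ) (hk : 2 ≤ k) (p : Polynomial ℝ)
    (hdeg : p.natDegree ≤ k)
    (h1 : p.eval 1 = 0) (h1' : p.derivative.eval 1 = 0)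
    (mk0 : ℝ) (m : ℝ → ℝ)
    (hm : ∀ t ∈ Ico (0:ℝ) 1,
      m t = (1 - t) ^ k * mk0 -
        (1 - t) ^ k * ∫ u in (0:ℝ)..t, p.derivative.eval u / (1 - u) ^ (k + 1)) :
    ∃ q : Polynomial ℝ, q.natDegree ≤ k ∧
      (∀ t ∈ Ico (0:ℝ) 1, q.eval t = m t) ∧
      q.eval 1 = 0 ∧
      Filter.Tendsto (fun t => m t / (1 - t)) (nhdsWithin 1 (Iio (1:ℝ)))
        (nhds ((p.derivative.derivative.eval 1) / ((k : ℝ) - 1))) := by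
  set P : Polynomial ℝ := p.comp (1 - X) with hPdef
  have hoX : ((1 : Polynomial ℝ) - X).comp (1 - X) = X := by
    simp [Polynomial.sub_comp]
  have hpP : p = P.comp (1 - X) := by
    rw [hPdef, Polynomial.comp_assoc, hoX, Polynomial.comp_X]
  have hPdeg : P.natDegree ≤ k := by
    have h1X : ((1 : Polynomial ℝ) - X).natDegree = 1 := by
      compute_degree!
    rw [hPdef, Polynomial.natDegree_comp, h1X, mul_one]; exact hdeg
  set d : ℕ → ℝ := fun i => P.coeff i with hd
  have hd0 : d 0 = 0 := by
    simp only [hd, Polynomial.coeff_zero_eq_eval_zero, hPdef, Polynomial.eval_comp]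
    simpa using h1
  have hdP1 : Polynomial.derivative P = -((Polynomial.derivative p).comp (1 - X)) := by
    rw [hPdef, Polynomial.derivative_comp]
    simp [mul_comm]
  have hd1 : d 1 = 0 := by
    have h := Polynomial.coeff_derivative P 0
    rw [hdP1] at h
    simp only [Polynomial.coeff_zero_eq_eval_zero] at h
    simp only [Polynomial.eval_neg, Polynomial.eval_comp] at h
    simp only [hd]
    have : Polynomial.eval (Polynomial.eval 0 (1 - X)) (Polynomial.derivative p) = 0 := by
      simpa using h1'
    rw [this] at h
    simpa using h.symm
  have hd2 : 2 * d 2 = p.derivative.derivative.eval 1 := by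
    have hdd : Polynomial.derivative (Polynomial.derivative P)
        = (Polynomial.derivative (Polynomial.derivative p)).comp (1 - X) := by
      rw [hdP1, derivative_neg, Polynomial.derivative_comp]
      simp [mul_comm]
    have e1 := Polynomial.coeff_derivative (Polynomial.derivative P) 0
    have e2 := Polynomial.coeff_derivative P 1
    have e3 : (Polynomial.derivative (Polynomial.derivative P)).coeff 0
        = p.derivative.derivative.eval 1 := by
      rw [hdd, Polynomial.coeff_zero_eq_eval_zero, Polynomial.eval_comp]
      norm_num
    rw [e3, e2] at e1
    push_cast at e1
    simp only [hd]
    linarith [e1]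
  -- polynomial expansion of p in powers of (1 - X)
  have hpsum : p = ∑ i ∈ Finset.range (k+1), C (d i) * (1 - X)^i := by
    have hPsum : P = ∑ i ∈ Finset.range (k+1), C (d i) * X^i := by
      conv_lhs => rw [P.as_sum_range' (k+1) (lt_of_le_of_lt hPdeg (Nat.lt_succ_self k))]
      exact Finset.sum_congr rfl fun i _ => by rw [Polynomial.C_mul_X_pow_eq_monomial]
    conv_lhs => rw [hpP, hPsum]
    simp [Polynomial.eval₂_finset_sum, Polynomial.comp]
  -- derivative expansion
  have hp'sum : ∀ u : ℝ, p.derivative.eval u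
      = ∑ i ∈ Finset.range (k+1), d i * ((i:ℝ) * (1-u)^(i-1) * (-1)) := by
    intro u
    conv_lhs => rw [hpsum]
    rw [Polynomial.derivative_sum, Polynomial.eval_finset_sum]
    refine Finset.sum_congr rfl fun i _ => ?_
    rw [Polynomial.derivative_C_mul, Polynomial.derivative_pow]
    simp [mul_assoc]
  -- antiderivative
  set c : ℕ → ℝ := fun i => (-(i:ℝ) * d i) / ((k+1-i : ℕ) : ℝ) with hc
  set H : ℝ → ℝ := fun u => ∑ i ∈ Finset.range (k+1), c i * ((1-u)^(k+1-i))⁻¹ with hH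
  have hc0 : c 0 = 0 := by simp [hc]
  have hc1 : c 1 = 0 := by simp [hc, hd1]
  have hderiv : ∀ u : ℝ, u < 1 →
      HasDerivAt H (p.derivative.eval u / (1-u)^(k+1)) u := by
    intro u hu
    have hne : (1:ℝ) - u ≠ 0 := by linarith
    have hmain : HasDerivAt H (∑ i ∈ Finset.range (k+1),
        c i * (-(((k+1-i : ℕ):ℝ) * (1-u)^(k+1-i-1) * (-1)) / ((1-u)^(k+1-i))^2)) u := by
      rw [hH]
      apply HasDerivAt.fun_sum
      intro i _
      have h0 : HasDerivAt (fun y : ℝ => 1 - y) (-1) u := (hasDerivAt_id u).const_sub 1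
      have hpow := h0.pow (k+1-i)
      have hinv := hpow.inv (pow_ne_zero _ hne)
      exact hinv.const_mul (c i)
    convert hmain using 1
    rw [hp'sum u, Finset.sum_div]
    refine Finset.sum_congr rfl fun i hi => ?_
    rcases i with _ | j
    · simp [hc0]
    · have hik : j + 1 ≤ k := by
        simpa [Nat.lt_succ_iff] using Finset.mem_range.mp hi
      obtain ⟨l, hl⟩ := Nat.exists_eq_add_of_le hik
      have e1 : k + 1 - (j+1) = l + 1 := by omega
      have e2 : k + 1 - (j+1) - 1 = l := by omega
      have e3 : (j+1) - 1 = j := by omega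
      have e4 : k + 1 = j + l + 2 := by omega
      rw [hc]
      simp only [e2]
      simp only [e1, e3]
      rw [e4]
      push_cast
      field_simp
      ring
  have hint : ∀ t ∈ Ico (0:ℝ) 1,
      (∫ u in (0:ℝ)..t, p.derivative.eval u / (1 - u) ^ (k + 1)) = H t - H 0 := by
    intro t ht
    obtain ⟨ht0, ht1⟩ := ht
    apply intervalIntegral.integral_eq_sub_of_hasDerivAt
    · intro u hu
      rw [Set.uIcc_of_le ht0] at hu
      exact hderiv u (lt_of_le_of_lt hu.2 ht1)
    · apply ContinuousOn.intervalIntegrable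
      apply ContinuousOn.div
      · exact (Polynomial.continuous _).continuousOn
      · exact ((continuous_const.sub continuous_id).pow (k+1)).continuousOn
      · intro u hu
        rw [Set.uIcc_of_le ht0] at hu
        have : (1:ℝ) - u ≠ 0 := by
          have := hu.2; intro h; nlinarith
        exact pow_ne_zero _ this
  set q : Polynomial ℝ := C (mk0 + H 0) * (1-X)^k
      - ∑ i ∈ Finset.range (k+1), C (c i) * (1-X)^(i-1) with hq
  have hqeval : ∀ t : ℝ, q.eval t
      = (mk0 + H 0) * (1-t)^k - ∑ i ∈ Finset.range (k+1), c i * (1-t)^(i-1) := by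
    intro t; simp [hq, Polynomial.eval_finset_sum]
  have hqm : ∀ t ∈ Ico (0:ℝ) 1, q.eval t = m t := by
    intro t ht
    rw [hm t ht, hint t ht, hqeval]
    have hne : (1:ℝ) - t ≠ 0 := by
      have := ht.2; intro h; nlinarith
    have key : (1-t)^k * H t = ∑ i ∈ Finset.range (k+1), c i * (1-t)^(i-1) := by
      rw [hH, Finset.mul_sum]
      refine Finset.sum_congr rfl fun i hi => ?_
      rcases i with _ | j
      · simp [hc0]
      · have hik : j + 1 ≤ k := by
          simpa [Nat.lt_succ_iff] using Finset.mem_range.mp hi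
        have e1 : k + 1 - (j+1) = k - j := by omega
        have e2 : (j+1) - 1 = j := by omega
        have e3 : k = j + (k - j) := by omega
        rw [e1, e2]
        rw [show (1-t)^k = (1-t)^j * (1-t)^(k-j) by rw [← pow_add, ← e3]]
        field_simp
    rw [mul_sub, key]
    ring
  have hqdeg : q.natDegree ≤ k := by
    have h1X : ((1 : Polynomial ℝ) - X).natDegree = 1 := by compute_degree!
    rw [hq]
    apply le_trans (Polynomial.natDegree_sub_le _ _)
    apply max_le
    · apply le_trans (Polynomial.natDegree_C_mul_le _ _)
      apply le_trans Polynomial.natDegree_pow_le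
      rw [h1X, mul_one]
    · apply le_trans (Polynomial.natDegree_sum_le _ _)
      refine (Finset.fold_max_le k).mpr ⟨Nat.zero_le k, fun i hi => ?_⟩
      simp only [Function.comp_apply]
      apply le_trans (Polynomial.natDegree_C_mul_le _ _)
      apply le_trans Polynomial.natDegree_pow_le
      rw [h1X, mul_one]
      have := Finset.mem_range.mp hi
      omega
  have hq1 : q.eval 1 = 0 := by
    rw [hqeval]
    have hz : ((1:ℝ) - 1) = 0 := by norm_num
    rw [hz]
    rw [zero_pow (by omega : k ≠ 0)]
    rw [Finset.sum_eq_zero]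
    · ring
    · intro i _
      match i with
      | 0 => simp [hc0]
      | 1 => simp [hc1]
      | (n+2) => simp [pow_succ]
  set g : ℝ → ℝ := fun t => (mk0 + H 0) * (1-t)^(k-1)
      - ∑ i ∈ Finset.range (k+1), c i * (1-t)^(i-2) with hg
  have hgq : ∀ t : ℝ, g t * (1 - t) = q.eval t := by
    intro t
    rw [hqeval]
    simp only [hg]
    rw [sub_mul, Finset.sum_mul]
    congr 1
    · rw [mul_assoc, ← pow_succ]
      congr 2
      omega
    · refine Finset.sum_congr rfl fun i _ => ?_
      match i with
      | 0 => simp [hc0]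
      | 1 => simp [hc1]
      | (n+2) =>
        rw [mul_assoc, ← pow_succ]
        norm_num
  have hg1 : g 1 = (p.derivative.derivative.eval 1) / ((k : ℝ) - 1) := by
    simp only [hg]
    have hz : ((1:ℝ) - 1) = 0 := by norm_num
    rw [hz, zero_pow (by omega : k - 1 ≠ 0)]
    rw [Finset.sum_eq_single 2]
    · have : c 2 = (-(2:ℝ) * d 2) / (((k-1 : ℕ)) : ℝ) := by
        rw [hc]; norm_num [show k+1-2 = k-1 by omega]
      rw [this]
      have hcast : (((k-1 : ℕ)) : ℝ) = (k:ℝ) - 1 := by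
        have : (1:ℕ) ≤ k := by omega
        push_cast [Nat.cast_sub this]; ring
      rw [hcast, ← hd2]
      have hne : (k:ℝ) - 1 ≠ 0 := by
        have : (2:ℝ) ≤ (k:ℝ) := by exact_mod_cast hk
        linarith
      field_simp
      norm_num
    · intro i hi hne2
      match i with
      | 0 => simp [hc0]
      | 1 => simp [hc1]
      | 2 => exact absurd rfl hne2
      | (n+3) => simp [pow_succ]
    · intro h
      exact absurd (Finset.mem_range.mpr (by omega)) h
  have htend : Filter.Tendsto (fun t => m t / (1 - t)) (nhdsWithin 1 (Iio (1:ℝ)))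
      (nhds ((p.derivative.derivative.eval 1) / ((k : ℝ) - 1))) := by
    have hcg : Continuous g := by
      rw [hg]
      apply Continuous.sub
      · exact continuous_const.mul ((continuous_const.sub continuous_id).pow _)
      · exact continuous_finset_sum _ fun i _ =>
          continuous_const.mul ((continuous_const.sub continuous_id).pow _)
    have h2 : Filter.Tendsto g (nhdsWithin 1 (Iio (1:ℝ))) (nhds (g 1)) :=
      (hcg.tendsto 1).mono_left nhdsWithin_le_nhds
    rw [hg1] at h2
    apply Filter.Tendsto.congr' _ h2
    filter_upwards [Ioo_mem_nhdsLT_of_mem (show (1:ℝ) ∈ Ioc (0:ℝ) 1 by norm_num)] with t ht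
    have htm : t ∈ Ico (0:ℝ) 1 := ⟨le_of_lt ht.1, ht.2⟩
    have hne : (1:ℝ) - t ≠ 0 := by
      have := ht.2; intro h; nlinarith
    rw [← hqm t htm, ← hgq t]
    field_simp
  exact ⟨q, hqdeg, hqm, hq1, htend⟩
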